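/- Let I ⊂ (0,∞) be compact, θ a probability measure on I with topological support I, and a, b : I → ℝ continuous with 0 < a(h) ≤ 2 for all h ∈ I. Let γ be the measure on parameter triples (U, ℓ, T) ∈ (0,∞)³ defined by γ(f) = ∫_I ∫_0^1 f(ℓ^h, ℓ, ℓ^{a(h)}) ℓ^{−b(h)} dℓ θ(dh) for nonnegative measurable f. Set D(h) := b(h) − a(h) + 1. Let p be a positive integer such that 0 < h·p + 3 − D(h) < p for all h ∈ I. Then lim_{ε → 0⁺} [ log( γ[ U^p · ((ℓ ∧ ε)/ℓ)^p · ℓ T ] ) / log ε ] = inf_{h ∈ I} ( h·p + 3 − D(h) ), where γ[F(U,ℓ,T)] denotes the γ-integral of the function F of the coordinates and ℓ ∧ ε := min(ℓ, ε). The same limit holds for γ[U^p ℓ T 1_{ℓ < ε}]. (This recovers the multifractal scaling exponent ζ_p = inf_{h∈I}[hp + 3 − D(h)].) -/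

import Mathlib

open MeasureTheory Real Filter


lemma key_limit (s : ℝ) (F : ℝ → ℝ)
    (h1 : ∀ δ : ℝ, 0 < δ → ∃ c : ℝ, 0 < c ∧ ∀ ε : ℝ, 0 < ε → ε < 1 → c * ε ^ (s + δ) ≤ F ε)
    (h2 : ∃ C : ℝ, 0 < C ∧ ∀ ε : ℝ, 0 < ε → ε < 1 → F ε ≤ C * ε ^ s) :
    Tendsto (fun ε : ℝ => Real.log (F ε) / Real.log ε) (nhdsWithin 0 (Set.Ioi 0)) (nhds s) := by
  rw [Metric.tendsto_nhds]
  intro δ hδ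
  obtain ⟨c, hc, hlow⟩ := h1 (δ/2) (by linarith)
  obtain ⟨C, hC, hupp⟩ := h2
  have hlogtop : Tendsto (fun ε : ℝ => -Real.log ε) (nhdsWithin 0 (Set.Ioi 0)) atTop :=
    tendsto_neg_atBot_atTop.comp Real.tendsto_log_nhdsGT_zero
  have hlogC : Tendsto (fun ε : ℝ => Real.log C / Real.log ε) (nhdsWithin 0 (Set.Ioi 0)) (nhds 0) := by
    have := (Filter.Tendsto.const_div_atTop hlogtop (-Real.log C))
    simpa [neg_div_neg_eq] using this
  have hlogc : Tendsto (fun ε : ℝ => Real.log c / Real.log ε) (nhdsWithin 0 (Set.Ioi 0)) (nhds 0) := by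
    have := (Filter.Tendsto.const_div_atTop hlogtop (-Real.log c))
    simpa [neg_div_neg_eq] using this
  have hmem : ∀ᶠ ε in nhdsWithin (0:ℝ) (Set.Ioi 0), ε ∈ Set.Ioo (0:ℝ) 1 :=
    Ioo_mem_nhdsGT_of_mem (by constructor <;> norm_num)
  have hC' := (hlogC.eventually (eventually_abs_sub_lt 0 (show (0:ℝ) < δ/2 by linarith)))
  have hc' := (hlogc.eventually (eventually_abs_sub_lt 0 (show (0:ℝ) < δ/2 by linarith)))
  filter_upwards [hmem, hC', hc'] with ε hε hCe hce
  obtain ⟨hε0, hε1⟩ := hε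
  have hlogε : Real.log ε < 0 := Real.log_neg hε0 hε1
  have hFpos : 0 < F ε := lt_of_lt_of_le (by positivity) (hlow ε hε0 hε1)
  have hup : Real.log (F ε) ≤ Real.log C + s * Real.log ε := by
    calc Real.log (F ε) ≤ Real.log (C * ε ^ s) := Real.log_le_log hFpos (hupp ε hε0 hε1)
    _ = Real.log C + s * Real.log ε := by
        rw [Real.log_mul (ne_of_gt hC) (by positivity), Real.log_rpow hε0]
  have hlo : Real.log c + (s + δ/2) * Real.log ε ≤ Real.log (F ε) := by
    calc Real.log c + (s + δ/2) * Real.log ε = Real.log (c * ε ^ (s + δ/2)) := by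
          rw [Real.log_mul (ne_of_gt hc) (by positivity), Real.log_rpow hε0]
    _ ≤ Real.log (F ε) := Real.log_le_log (by positivity) (hlow ε hε0 hε1)
  rw [Real.dist_eq, abs_lt]
  rw [sub_zero, abs_lt] at hCe hce
  constructor
  · have : (Real.log C + s * Real.log ε) / Real.log ε ≤ Real.log (F ε) / Real.log ε :=
      (div_le_div_right_of_neg hlogε).2 hup
    have heq : (Real.log C + s * Real.log ε) / Real.log ε = Real.log C / Real.log ε + s := by
      rw [add_div, mul_div_assoc, div_self (ne_of_lt hlogε), mul_one]
    rw [heq] at this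
    nlinarith [hCe.1, hCe.2]
  · have : Real.log (F ε) / Real.log ε ≤ (Real.log c + (s + δ/2) * Real.log ε) / Real.log ε :=
      (div_le_div_right_of_neg hlogε).2 hlo
    have heq : (Real.log c + (s + δ/2) * Real.log ε) / Real.log ε
        = Real.log c / Real.log ε + (s + δ/2) := by
      rw [add_div, mul_div_assoc, div_self (ne_of_lt hlogε), mul_one]
    rw [heq] at this
    nlinarith [hce.1, hce.2]

lemma inner2 (p : ℕ) (q h A B ε : ℝ) (hq0 : 0 < q) (hε0 : 0 < ε) (hε1 : ε < 1)
    (hq : h * p + 2 + A - B = q) :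
    (∫ ℓ in Set.Ioo (0 : ℝ) 1,
      Set.indicator {l : ℝ | l < ε} (fun l => (l ^ h) ^ p * (l * l ^ A) * l ^ (-B)) ℓ)
      = ε ^ q / q := by
  have hmeas : MeasurableSet {l : ℝ | l < ε} := measurableSet_lt measurable_id measurable_const
  rw [MeasureTheory.setIntegral_indicator hmeas]
  have hset : Set.Ioo (0:ℝ) 1 ∩ {l : ℝ | l < ε} = Set.Ioo 0 ε := by
    ext x; simp only [Set.mem_inter_iff, Set.mem_Ioo, Set.mem_setOf_eq]
    constructor
    · rintro ⟨⟨h1, h2⟩, h3⟩; exact ⟨h1, h3⟩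
    · rintro ⟨h1, h3⟩; exact ⟨⟨h1, lt_trans h3 hε1⟩, h3⟩
  rw [hset]
  have hcongr : ∀ x ∈ Set.Ioo (0:ℝ) ε,
      (x ^ h) ^ p * (x * x ^ A) * x ^ (-B) = x ^ (q - 1) := by
    intro x hx
    have hx0 : (0:ℝ) < x := hx.1
    have e1 : (x ^ h) ^ p * (x * x ^ A) * x ^ (-B)
        = x ^ (h * p) * x ^ (1:ℝ) * x ^ A * x ^ (-B) := by
      rw [← Real.rpow_natCast (x ^ h) p, ← Real.rpow_mul hx0.le, Real.rpow_one]; ring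
    rw [e1, ← Real.rpow_add hx0, ← Real.rpow_add hx0, ← Real.rpow_add hx0]
    congr 1; linarith
  rw [MeasureTheory.setIntegral_congr_fun measurableSet_Ioo hcongr]
  rw [← MeasureTheory.integral_Ioc_eq_integral_Ioo,
    ← intervalIntegral.integral_of_le (le_of_lt hε0)]
  rw [integral_rpow (Or.inl (by linarith))]
  rw [Real.zero_rpow (by linarith : q - 1 + 1 ≠ 0)]
  ring_nf

lemma inner1 (p : ℕ) (q h A B ε : ℝ) (hq0 : 0 < q) (hqp : q < p)
    (hε0 : 0 < ε) (hε1 : ε < 1) (hq : h * p + 2 + A - B = q) :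
    (∫ ℓ in Set.Ioo (0 : ℝ) 1,
        (ℓ ^ h) ^ p * ((min ℓ ε) / ℓ) ^ p * (ℓ * ℓ ^ A) * ℓ ^ (-B))
      = ε ^ q / q + (ε ^ q - ε ^ (p : ℝ)) / (p - q) := by
  set f : ℝ → ℝ := fun ℓ => (ℓ ^ h) ^ p * ((min ℓ ε) / ℓ) ^ p * (ℓ * ℓ ^ A) * ℓ ^ (-B) with hf
  have hqp' : q - p ≠ 0 := by
    intro hcontra; apply absurd hqp; simp [sub_eq_zero] at hcontra; simp [hcontra]
  -- EqOn pieces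
  have heq1 : Set.EqOn f (fun x => x ^ (q - 1)) (Set.Ioc 0 ε) := by
    intro x hx
    have hx0 : (0:ℝ) < x := hx.1
    have hmin : min x ε = x := min_eq_left hx.2
    have e1 : f x = x ^ (h * p) * x ^ (1:ℝ) * x ^ A * x ^ (-B) := by
      simp only [hf, hmin, div_self (ne_of_gt hx0), one_pow]
      rw [← Real.rpow_natCast (x ^ h) p, ← Real.rpow_mul hx0.le, Real.rpow_one]; ring
    simp only [e1, ← Real.rpow_add hx0]
    congr 1; push_cast; linarith
  have heq2 : Set.EqOn f (fun x => ε ^ (p:ℝ) * x ^ (q - 1 - p)) (Set.Ioo ε 1) := by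
    intro x hx
    have hx0 : (0:ℝ) < x := lt_trans hε0 hx.1
    have hmin : min x ε = ε := min_eq_right hx.1.le
    have hdiv : ((ε / x) ^ p : ℝ) = ε ^ (p:ℝ) * x ^ (-(p:ℝ)) := by
      rw [div_pow, ← Real.rpow_natCast ε p, ← Real.rpow_natCast x p, div_eq_mul_inv,
        ← Real.rpow_neg hx0.le]
    have e1 : f x = ε ^ (p:ℝ) * (x ^ (h * p) * x ^ (-(p:ℝ)) * x ^ (1:ℝ) * x ^ A * x ^ (-B)) := by
      simp only [hf, hmin, hdiv]
      rw [← Real.rpow_natCast (x ^ h) p, ← Real.rpow_mul hx0.le, Real.rpow_one]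
      ring
    simp only [e1, ← Real.rpow_add hx0]
    congr 2; push_cast; linarith
  -- integrability
  have hint1 : IntegrableOn (fun x : ℝ => x ^ (q - 1)) (Set.Ioc 0 ε) :=
    (intervalIntegrable_iff_integrableOn_Ioc_of_le hε0.le).1 (intervalIntegral.intervalIntegrable_rpow' (by linarith))
  have hint2 : IntegrableOn (fun x : ℝ => ε ^ (p:ℝ) * x ^ (q - 1 - p)) (Set.Ioo ε 1) := by
    have hbase : IntegrableOn (fun x : ℝ => x ^ (q - 1 - (p:ℝ))) (Set.Ioo ε 1) := by
      rw [← integrableOn_Ioc_iff_integrableOn_Ioo]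
      exact (intervalIntegrable_iff_integrableOn_Ioc_of_le hε1.le).1
        (intervalIntegral.intervalIntegrable_rpow (Or.inr (by
          rw [Set.uIcc_of_le hε1.le]
          simp only [Set.mem_Icc, not_and, not_le]
          intro hcon; linarith)))
    exact hbase.const_mul _
  have hsplit : Set.Ioc (0:ℝ) ε ∪ Set.Ioo ε 1 = Set.Ioo 0 1 :=
    Set.Ioc_union_Ioo_eq_Ioo hε0.le hε1
  have hdisj : Disjoint (Set.Ioc (0:ℝ) ε) (Set.Ioo ε 1) := by
    apply Set.disjoint_left.mpr
    rintro x ⟨_, hx2⟩ ⟨hx3, _⟩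
    exact absurd hx3 (not_lt.mpr hx2)
  rw [← hsplit, MeasureTheory.setIntegral_union hdisj
    measurableSet_Ioo
    (hint1.congr_fun heq1.symm measurableSet_Ioc)
    (hint2.congr_fun heq2.symm measurableSet_Ioo)]
  rw [MeasureTheory.setIntegral_congr_fun measurableSet_Ioc heq1,
    MeasureTheory.setIntegral_congr_fun measurableSet_Ioo heq2]
  have I1 : (∫ x in Set.Ioc (0:ℝ) ε, x ^ (q - 1)) = ε ^ q / q := by
    rw [← intervalIntegral.integral_of_le hε0.le, integral_rpow (Or.inl (by linarith)),
      Real.zero_rpow (by linarith : q - 1 + 1 ≠ 0)]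
    ring_nf
  have I2 : (∫ x in Set.Ioo ε 1, ε ^ (p:ℝ) * x ^ (q - 1 - p)) = (ε ^ q - ε ^ (p:ℝ)) / (p - q) := by
    rw [MeasureTheory.integral_const_mul, ← MeasureTheory.integral_Ioc_eq_integral_Ioo,
      ← intervalIntegral.integral_of_le hε1.le,
      integral_rpow (Or.inr ⟨by intro hcon; apply hqp'; linarith, by
        rw [Set.uIcc_of_le hε1.le]
        simp only [Set.mem_Icc, not_and, not_le]
        intro hcon; linarith⟩)]
    have e3 : q - 1 - p + 1 = q - p := by ring
    rw [e3, Real.one_rpow]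
    have e4 : ε ^ (p:ℝ) * ε ^ (q - p) = ε ^ q := by
      rw [← Real.rpow_add hε0]; congr 1; ring
    have hpq2 : (p:ℝ) - q ≠ 0 := by intro hcon; apply hqp'; linarith
    calc ε ^ (p:ℝ) * ((1 - ε ^ (q - ↑p)) / (q - ↑p))
        = (ε ^ (p:ℝ) - ε ^ (p:ℝ) * ε ^ (q - ↑p)) / (q - ↑p) := by ring
      _ = (ε ^ (p:ℝ) - ε ^ q) / (q - ↑p) := by rw [e4]
      _ = (ε ^ q - ε ^ (p:ℝ)) / (↑p - q) := by rw [div_eq_div_iff hqp' hpq2]; ring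
  rw [I1, I2]

lemma outer_bounds (I : Set ℝ) (hIcomp : IsCompact I)
    (θ : Measure ℝ) [IsProbabilityMeasure θ]
    (hθI : θ Iᶜ = 0)
    (hθfull : ∀ h ∈ I, ∀ r : ℝ, 0 < r → 0 < θ (Metric.ball h r))
    (ζ : ℝ → ℝ) (hζ : ContinuousOn ζ I)
    (hm : ℝ) (hmI : hm ∈ I) (hmin : ∀ h ∈ I, ζ hm ≤ ζ h)
    (hM : ℝ) (hMI : hM ∈ I) (hmax : ∀ h ∈ I, ζ h ≤ ζ hM)
    (hs0 : 0 < ζ hm)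
    (c₀ C₀ : ℝ) (hc₀ : 0 < c₀) (hC₀ : 0 < C₀)
    (G : ℝ → ℝ → ℝ)
    (hGcont : ∀ ε : ℝ, 0 < ε → ε < 1 → ContinuousOn (fun h => G h ε) I)
    (hlow : ∀ ε : ℝ, 0 < ε → ε < 1 → ∀ h ∈ I, c₀ * ε ^ ζ h ≤ G h ε)
    (hupp : ∀ ε : ℝ, 0 < ε → ε < 1 → ∀ h ∈ I, G h ε ≤ C₀ * ε ^ ζ h) :
    Tendsto (fun ε : ℝ => Real.log (∫ h in I, G h ε ∂θ) / Real.log ε)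
      (nhdsWithin 0 (Set.Ioi 0)) (nhds (ζ hm)) := by
  have hIm : MeasurableSet I := hIcomp.measurableSet
  have hGint : ∀ ε : ℝ, 0 < ε → ε < 1 → IntegrableOn (fun h => G h ε) I θ := fun ε hε0 hε1 =>
    (hGcont ε hε0 hε1).integrableOn_compact hIcomp
  apply key_limit
  · -- lower bound
    intro δ hδ
    have hcw : ContinuousWithinAt ζ I hm := hζ hm hmI
    rw [Metric.continuousWithinAt_iff] at hcw
    obtain ⟨r, hr, hball⟩ := hcw δ hδ
    set B := I ∩ Metric.ball hm r with hB
    have hBm : MeasurableSet B := hIm.inter Metric.isOpen_ball.measurableSet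
    have hθB : 0 < (θ B).toReal := by
      refine ENNReal.toReal_pos ?_ (measure_ne_top θ B)
      intro hzero
      have h1 : θ (Metric.ball hm r) ≤ θ B + θ Iᶜ := by
        refine le_trans (measure_mono ?_) (measure_union_le _ _)
        intro x hx
        by_cases hxI : x ∈ I
        · exact Or.inl ⟨hxI, hx⟩
        · exact Or.inr hxI
      rw [hzero, hθI, add_zero] at h1
      exact absurd (lt_of_lt_of_le (hθfull hm hmI r hr) h1) (lt_irrefl 0)
    refine ⟨c₀ * (θ B).toReal, by positivity, fun ε hε0 hε1 => ?_⟩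
    have hGnn : ∀ h ∈ I, 0 ≤ G h ε := fun h hh =>
      le_trans (by positivity) (hlow ε hε0 hε1 h hh)
    have step1 : (∫ h in B, G h ε ∂θ) ≤ ∫ h in I, G h ε ∂θ := by
      apply setIntegral_mono_set (hGint ε hε0 hε1)
      · exact (ae_restrict_iff' hIm).2 (ae_of_all _ hGnn)
      · exact HasSubset.Subset.eventuallyLE Set.inter_subset_left
    have step2 : (θ B).toReal * (c₀ * ε ^ (ζ hm + δ)) ≤ ∫ h in B, G h ε ∂θ := by
      have : (∫ _ in B, (c₀ * ε ^ (ζ hm + δ)) ∂θ) ≤ ∫ h in B, G h ε ∂θ := by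
        apply setIntegral_mono_on (integrableOn_const (measure_ne_top θ B) enorm_ne_top)
          ((hGint ε hε0 hε1).mono_set Set.inter_subset_left) hBm
        intro h hh
        calc c₀ * ε ^ (ζ hm + δ) ≤ c₀ * ε ^ ζ h := by
              apply mul_le_mul_of_nonneg_left _ hc₀.le
              apply Real.rpow_le_rpow_of_exponent_ge hε0 hε1.le
              have := hball hh.1 (by simpa [Metric.mem_ball] using hh.2)
              rw [Real.dist_eq, abs_lt] at this
              linarith
          _ ≤ G h ε := hlow ε hε0 hε1 h hh.1
      rwa [setIntegral_const, smul_eq_mul, measureReal_def] at this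
    calc c₀ * (θ B).toReal * ε ^ (ζ hm + δ) = (θ B).toReal * (c₀ * ε ^ (ζ hm + δ)) := by ring
      _ ≤ ∫ h in B, G h ε ∂θ := step2
      _ ≤ ∫ h in I, G h ε ∂θ := step1
  · -- upper bound
    refine ⟨C₀, hC₀, fun ε hε0 hε1 => ?_⟩
    calc (∫ h in I, G h ε ∂θ) ≤ ∫ _ in I, C₀ * ε ^ ζ hm ∂θ := by
          apply setIntegral_mono_on (hGint ε hε0 hε1)
            (integrableOn_const (measure_ne_top θ I) enorm_ne_top) hIm
          intro h hh
          calc G h ε ≤ C₀ * ε ^ ζ h := hupp ε hε0 hε1 h hh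
            _ ≤ C₀ * ε ^ ζ hm := by
                apply mul_le_mul_of_nonneg_left _ hC₀.le
                exact Real.rpow_le_rpow_of_exponent_ge hε0 hε1.le (hmin h hh)
      _ = (θ I).toReal * (C₀ * ε ^ ζ hm) := by rw [setIntegral_const, smul_eq_mul, measureReal_def]
      _ ≤ 1 * (C₀ * ε ^ ζ hm) := by
          apply mul_le_mul_of_nonneg_right _ (by positivity)
          exact ENNReal.toReal_le_of_le_ofReal zero_le_one (by simp [prob_le_one])
      _ = C₀ * ε ^ ζ hm := one_mul _

theorem stmt_18 (I : Set ℝ) (hIpos : I ⊆ Set.Ioi (0 : ℝ))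
    (hIcomp : IsCompact I) (hIne : I.Nonempty)
    (θ : Measure ℝ) [IsProbabilityMeasure θ]
    (hθI : θ Iᶜ = 0)
    (hθfull : ∀ h ∈ I, ∀ r : ℝ, 0 < r → 0 < θ (Metric.ball h r))
    (a b : ℝ → ℝ) (ha : ContinuousOn a I) (hb : ContinuousOn b I)
    (ha' : ∀ h ∈ I, 0 < a h ∧ a h ≤ 2)
    (p : ℕ) (hp : 0 < p)
    (hrange : ∀ h ∈ I,
      0 < h * p + 3 - (b h - a h + 1) ∧ h * p + 3 - (b h - a h + 1) < p) :
    Tendsto (fun ε : ℝ =>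
        Real.log (∫ h in I, (∫ ℓ in Set.Ioo (0 : ℝ) 1,
            (ℓ ^ h) ^ p * ((min ℓ ε) / ℓ) ^ p * (ℓ * ℓ ^ a h) * ℓ ^ (-b h)) ∂θ) /
          Real.log ε)
      (nhdsWithin 0 (Set.Ioi 0))
      (nhds (sInf ((fun h => h * p + 3 - (b h - a h + 1)) '' I))) ∧
    Tendsto (fun ε : ℝ =>
        Real.log (∫ h in I, (∫ ℓ in Set.Ioo (0 : ℝ) 1,
            Set.indicator {l : ℝ | l < ε}
              (fun l => (l ^ h) ^ p * (l * l ^ a h) * l ^ (-b h)) ℓ) ∂θ) /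
          Real.log ε)
      (nhdsWithin 0 (Set.Ioi 0))
      (nhds (sInf ((fun h => h * p + 3 - (b h - a h + 1)) '' I))) := by
  classical
  set ζ : ℝ → ℝ := fun h => h * p + 2 + a h - b h with hζdef
  have hζeq : ∀ h : ℝ, h * p + 3 - (b h - a h + 1) = ζ h := fun h => by
    simp only [hζdef]; ring
  have hζcont : ContinuousOn ζ I :=
    (((continuous_mul_right (p:ℝ)).continuousOn.add continuousOn_const).add ha).sub hb
  have hIm : MeasurableSet I := hIcomp.measurableSet
  obtain ⟨hm, hmI, hminOn⟩ := hIcomp.exists_isMinOn hIne hζcont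
  obtain ⟨hM, hMI, hmaxOn⟩ := hIcomp.exists_isMaxOn hIne hζcont
  have hmin : ∀ h ∈ I, ζ hm ≤ ζ h := fun h hh => hminOn hh
  have hmax : ∀ h ∈ I, ζ h ≤ ζ hM := fun h hh => hmaxOn hh
  have hs0 : 0 < ζ hm := by have := (hrange hm hmI).1; rwa [hζeq hm] at this
  have hMp : ζ hM < p := by have := (hrange hM hMI).2; rwa [hζeq hM] at this
  have hM0 : 0 < ζ hM := lt_of_lt_of_le hs0 (hmin hM hMI)
  have hbound : ∀ h ∈ I, 0 < ζ h ∧ ζ h < p := fun h hh =>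
    ⟨lt_of_lt_of_le hs0 (hmin h hh), lt_of_le_of_lt (hmax h hh) hMp⟩
  have hsinf : sInf ((fun h => h * p + 3 - (b h - a h + 1)) '' I) = ζ hm := by
    have himg : (fun h : ℝ => h * p + 3 - (b h - a h + 1)) = ζ := funext hζeq
    rw [himg]
    exact IsLeast.csInf_eq ⟨Set.mem_image_of_mem ζ hmI,
      fun y hy => by obtain ⟨x, hx, rfl⟩ := hy; exact hmin x hx⟩
  rw [hsinf]
  constructor
  · -- part 1
    set G : ℝ → ℝ → ℝ := fun h ε =>
      ε ^ ζ h / ζ h + (ε ^ ζ h - ε ^ (p:ℝ)) / (p - ζ h) with hGdef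
    have hcongr : ∀ᶠ ε : ℝ in nhdsWithin 0 (Set.Ioi 0),
        (∫ h in I, G h ε ∂θ) =
        (∫ h in I, (∫ ℓ in Set.Ioo (0 : ℝ) 1,
            (ℓ ^ h) ^ p * ((min ℓ ε) / ℓ) ^ p * (ℓ * ℓ ^ a h) * ℓ ^ (-b h)) ∂θ) := by
      filter_upwards [Ioo_mem_nhdsGT_of_mem
        (show (0:ℝ) ∈ Set.Ico (0:ℝ) 1 by constructor <;> norm_num)] with ε hε
      refine (setIntegral_congr_fun hIm fun h hh => ?_).symm
      exact inner1 p (ζ h) h (a h) (b h) ε (hbound h hh).1 (hbound h hh).2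
        hε.1 hε.2 rfl
    refine Tendsto.congr' (hcongr.mono fun ε hε => by rw [hε]) (outer_bounds I hIcomp θ hθI hθfull ζ hζcont hm hmI hmin
      hM hMI hmax hs0 (1 / ζ hM) (1 / ζ hm + 1 / (p - ζ hM))
      (one_div_pos.2 hM0) (add_pos (one_div_pos.2 hs0) (one_div_pos.2 (by linarith))) G ?_ ?_ ?_)
    · -- continuity
      intro ε hε0 hε1
      have hrp : ContinuousOn (fun h => ε ^ ζ h) I :=
        continuousOn_const.rpow hζcont (fun x _ => Or.inl (ne_of_gt hε0))
      exact (hrp.div hζcont fun h hh => ne_of_gt (hbound h hh).1).add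
        ((hrp.sub continuousOn_const).div (continuousOn_const.sub hζcont)
          fun h hh => ne_of_gt (by linarith [(hbound h hh).2]))
    · -- lower bound
      intro ε hε0 hε1 h hh
      obtain ⟨hq0, hqp⟩ := hbound h hh
      have h2 : (0:ℝ) ≤ (ε ^ ζ h - ε ^ (p:ℝ)) / (p - ζ h) := by
        apply div_nonneg _ (by linarith)
        have : ε ^ (p:ℝ) ≤ ε ^ ζ h :=
          Real.rpow_le_rpow_of_exponent_ge hε0 hε1.le hqp.le
        linarith
      have h1 : 1 / ζ hM * ε ^ ζ h ≤ ε ^ ζ h / ζ h := by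
        rw [one_div_mul_eq_div]
        exact div_le_div_of_nonneg_left (by positivity) hq0 (hmax h hh)
      linarith
    · -- upper bound
      intro ε hε0 hε1 h hh
      obtain ⟨hq0, hqp⟩ := hbound h hh
      have h1 : ε ^ ζ h / ζ h ≤ ε ^ ζ h / ζ hm :=
        div_le_div_of_nonneg_left (by positivity) hs0 (hmin h hh)
      have h2 : (ε ^ ζ h - ε ^ (p:ℝ)) / (p - ζ h) ≤ ε ^ ζ h / (p - ζ hM) := by
        apply div_le_div₀ (by positivity) _ (by linarith) (by linarith [hmax h hh])
        have : (0:ℝ) ≤ ε ^ (p:ℝ) := by positivity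
        linarith
      have h3 : (1 / ζ hm + 1 / (p - ζ hM)) * ε ^ ζ h
          = ε ^ ζ h / ζ hm + ε ^ ζ h / (p - ζ hM) := by ring
      rw [h3]
      linarith
  · -- part 2
    set G : ℝ → ℝ → ℝ := fun h ε => ε ^ ζ h / ζ h with hGdef
    have hcongr : ∀ᶠ ε : ℝ in nhdsWithin 0 (Set.Ioi 0),
        (∫ h in I, G h ε ∂θ) =
        (∫ h in I, (∫ ℓ in Set.Ioo (0 : ℝ) 1,
            Set.indicator {l : ℝ | l < ε}
              (fun l => (l ^ h) ^ p * (l * l ^ a h) * l ^ (-b h)) ℓ) ∂θ) := by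
      filter_upwards [Ioo_mem_nhdsGT_of_mem
        (show (0:ℝ) ∈ Set.Ico (0:ℝ) 1 by constructor <;> norm_num)] with ε hε
      refine (setIntegral_congr_fun hIm fun h hh => ?_).symm
      exact inner2 p (ζ h) h (a h) (b h) ε (hbound h hh).1 hε.1 hε.2 rfl
    refine Tendsto.congr' (hcongr.mono fun ε hε => by rw [hε]) (outer_bounds I hIcomp θ hθI hθfull ζ hζcont hm hmI hmin
      hM hMI hmax hs0 (1 / ζ hM) (1 / ζ hm)
      (one_div_pos.2 hM0) (one_div_pos.2 hs0) G ?_ ?_ ?_)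
    · intro ε hε0 hε1
      exact (continuousOn_const.rpow hζcont fun x _ => Or.inl (ne_of_gt hε0)).div
        hζcont fun h hh => ne_of_gt (hbound h hh).1
    · intro ε hε0 hε1 h hh
      rw [hGdef, one_div_mul_eq_div]
      exact div_le_div_of_nonneg_left (by positivity) (hbound h hh).1 (hmax h hh)
    · intro ε hε0 hε1 h hh
      rw [hGdef, one_div_mul_eq_div]
      exact div_le_div_of_nonneg_left (by positivity) hs0 (hmin h hh)
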